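/- Every unitary category is an inner product category: defining ⟨f|g⟩ := f ⋅ φ_X ⋅ g† for f : A → X and g : B → X (so ⟨f|g⟩ : A → B†), the axioms [IP.1]–[IP.4] hold, and the dual inner product computes as ⟨h|k⟩^ι = h† ⋅ φ_X^{-1} ⋅ k for h : X → A, k : X → B. -/
import Mathlib


open CategoryTheory

universe v u

/-- An (achiral) involutive category: a contravariant endofunctor `(−)†`
together with a natural isomorphism `ι : X → X††` satisfying `ι_{X†} ≫ (ι_X)† = 1`. -/
structure Involutive (C : Type u) [Category.{v} C] where
  dob : C → C
  dmap : ∀ {X Y : C}, (X ⟶ Y) → (dob Y ⟶ dob X)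
  dmap_id : ∀ X : C, dmap (𝟙 X) = 𝟙 (dob X)
  dmap_comp : ∀ {X Y Z : C} (f : X ⟶ Y) (g : Y ⟶ Z), dmap (f ≫ g) = dmap g ≫ dmap f
  ι : ∀ X : C, X ⟶ dob (dob X)
  ιinv : ∀ X : C, dob (dob X) ⟶ X
  ι_hom_inv : ∀ X : C, ι X ≫ ιinv X = 𝟙 X
  ι_inv_hom : ∀ X : C, ιinv X ≫ ι X = 𝟙 (dob (dob X))
  ι_natural : ∀ {X Y : C} (f : X ⟶ Y), f ≫ ι Y = ι X ≫ dmap (dmap f)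
  ι_dagger : ∀ X : C, ι (dob X) ≫ dmap (ι X) = 𝟙 (dob X)

/-- A unitary structure on an involutive category: isomorphisms `φ_X : X → X†`
with `φ_{X†} = (φ_X⁻¹)†` and `φ_X ≫ φ_{X†} = ι_X`. -/
structure UnitaryStruct {C : Type u} [Category.{v} C] (D : Involutive C) where
  φ : ∀ X : C, X ⟶ D.dob X
  φinv : ∀ X : C, D.dob X ⟶ X
  φ_hom_inv : ∀ X : C, φ X ≫ φinv X = 𝟙 X
  φ_inv_hom : ∀ X : C, φinv X ≫ φ X = 𝟙 (D.dob X)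
  u1 : ∀ X : C, φ (D.dob X) = D.dmap (φinv X)
  u2 : ∀ X : C, φ X ≫ φ (D.dob X) = D.ι X

/-- An inner product combinator on an involutive category. -/
structure IPStruct {C : Type u} [Category.{v} C] (D : Involutive C) where
  ip : ∀ {A B X : C}, (A ⟶ X) → (B ⟶ X) → (A ⟶ D.dob B)

/-- The dual inner product `⟨h|k⟩^ι := ι_{A†} ≫ ⟨k†|h†⟩† ≫ ι_B⁻¹`. -/
def IPStruct.dual {C : Type u} [Category.{v} C] {D : Involutive C} (S : IPStruct D)
    {X A B : C} (h : X ⟶ A) (k : X ⟶ B) : D.dob A ⟶ B :=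
  D.ι (D.dob A) ≫ D.dmap (S.ip (D.dmap k) (D.dmap h)) ≫ D.ιinv B

/-- An inner product category: axioms [IP.1]–[IP.4]. -/
structure InnerProduct {C : Type u} [Category.{v} C] (D : Involutive C) extends IPStruct D where
  ip1 : ∀ {A B X Y Z : C} (f : A ⟶ X) (g : B ⟶ X) (h : Y ⟶ A) (k : Z ⟶ B),
    ip (h ≫ f) (k ≫ g) = h ≫ ip f g ≫ D.dmap k
  ip2a : ∀ {A B X : C} (f : A ⟶ X) (g : B ⟶ X),
    D.ι A ≫ toIPStruct.dual (D.dmap f) (D.dmap g) = ip f g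
  ip2b : ∀ {A B X : C} (f : A ⟶ X) (g : B ⟶ X),
    D.ι B ≫ D.dmap (ip f g) = ip g f
  ip3 : ∀ {A B X : C} (f : A ⟶ X) (g : B ⟶ X) (h k : X ⟶ B),
    h ≫ g = 𝟙 X → ip f g ≫ toIPStruct.dual h k = f ≫ k
  ip4 : ∀ {A X Z : C} (f : A ⟶ Z) (g : A ⟶ X) (h k : X ⟶ A),
    g ≫ h = 𝟙 A → toIPStruct.dual f g ≫ ip h k = D.dmap (k ≫ f)

/-- The inner product induced by a unitary structure: `⟨f|g⟩ := f ≫ φ_X ≫ g†`. -/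
def UnitaryStruct.uip {C : Type u} [Category.{v} C] {D : Involutive C} (U : UnitaryStruct D)
    {A B X : C} (f : A ⟶ X) (g : B ⟶ X) : A ⟶ D.dob B :=
  f ≫ U.φ X ≫ D.dmap g

/-- The dual inner product induced by a unitary structure. -/
def UnitaryStruct.udual {C : Type u} [Category.{v} C] {D : Involutive C} (U : UnitaryStruct D)
    {X A B : C} (h : X ⟶ A) (k : X ⟶ B) : D.dob A ⟶ B :=
  D.ι (D.dob A) ≫ D.dmap (U.uip (D.dmap k) (D.dmap h)) ≫ D.ιinv B

/-- The inner adjoint `f* := φ_B ≫ f† ≫ φ_A⁻¹` of `f : A ⟶ B`. -/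
def UnitaryStruct.adj {C : Type u} [Category.{v} C] {D : Involutive C} (U : UnitaryStruct D)
    {A B : C} (f : A ⟶ B) : B ⟶ A :=
  U.φ B ≫ D.dmap f ≫ U.φinv A

/-- Every unitary category is an inner product category: with `⟨f|g⟩ := f ≫ φ_X ≫ g†`,
the dual inner product computes as `⟨h|k⟩^ι = h† ≫ φ_X⁻¹ ≫ k`, and [IP.1]–[IP.4] hold. -/
theorem unitary_is_inner_product {C : Type u} [Category.{v} C]
    (D : Involutive C) (U : UnitaryStruct D) :
    (∀ {X A B : C} (h : X ⟶ A) (k : X ⟶ B),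
      U.udual h k = D.dmap h ≫ U.φinv X ≫ k) ∧
    (∀ {A B X Y Z : C} (f : A ⟶ X) (g : B ⟶ X) (h : Y ⟶ A) (k : Z ⟶ B),
      U.uip (h ≫ f) (k ≫ g) = h ≫ U.uip f g ≫ D.dmap k) ∧
    (∀ {A B X : C} (f : A ⟶ X) (g : B ⟶ X),
      D.ι A ≫ U.udual (D.dmap f) (D.dmap g) = U.uip f g) ∧
    (∀ {A B X : C} (f : A ⟶ X) (g : B ⟶ X),
      D.ι B ≫ D.dmap (U.uip f g) = U.uip g f) ∧
    (∀ {A B X : C} (f : A ⟶ X) (g : B ⟶ X) (h k : X ⟶ B),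
      h ≫ g = 𝟙 X → U.uip f g ≫ U.udual h k = f ≫ k) ∧
    (∀ {A X Z : C} (f : A ⟶ Z) (g : A ⟶ X) (h k : X ⟶ A),
      g ≫ h = 𝟙 A → U.udual f g ≫ U.uip h k = D.dmap (k ≫ f)) := by

  have hdual : ∀ {X A B : C} (h : X ⟶ A) (k : X ⟶ B),
      U.udual h k = D.dmap h ≫ U.φinv X ≫ k := by
    intro X A B h k
    have n1 : D.ι (D.dob A) ≫ D.dmap (D.dmap (D.dmap h)) = D.dmap h ≫ D.ι (D.dob X) :=
      (D.ι_natural (D.dmap h)).symm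
    have n2 : D.ι (D.dob X) ≫ D.dmap (U.φ (D.dob X)) = U.φinv X ≫ D.ι X := by
      rw [U.u1]
      exact (D.ι_natural (U.φinv X)).symm
    have n3 : D.ι X ≫ D.dmap (D.dmap k) = k ≫ D.ι B := (D.ι_natural k).symm
    simp only [UnitaryStruct.udual, UnitaryStruct.uip, D.dmap_comp, Category.assoc]
    rw [reassoc_of% n1, reassoc_of% n2, reassoc_of% n3]
    simp [D.ι_hom_inv]
  have hphi : ∀ X : C, D.ι X ≫ U.φinv (D.dob X) = U.φ X := by
    intro X
    rw [← U.u2, Category.assoc, U.φ_hom_inv, Category.comp_id]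
  refine ⟨hdual, ?_, ?_, ?_, ?_, ?_⟩
  · intro A B X Y Z f g h k
    simp [UnitaryStruct.uip, D.dmap_comp]
  · intro A B X f g
    rw [hdual]
    have n : D.ι A ≫ D.dmap (D.dmap f) = f ≫ D.ι X := (D.ι_natural f).symm
    rw [reassoc_of% n, UnitaryStruct.uip, reassoc_of% (hphi X)]
  · intro A B X f g
    simp only [UnitaryStruct.uip, D.dmap_comp, Category.assoc]
    have n : D.ι B ≫ D.dmap (D.dmap g) = g ≫ D.ι X := (D.ι_natural g).symm
    rw [reassoc_of% n]
    congr 1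
    rw [← U.u2, Category.assoc, U.u1]
    slice_lhs 2 3 => rw [← D.dmap_comp, U.φ_hom_inv, D.dmap_id]
    simp
  · intro A B X f g h k hg
    rw [hdual]
    simp only [UnitaryStruct.uip, Category.assoc]
    slice_lhs 3 4 => rw [← D.dmap_comp, hg, D.dmap_id]
    simp only [Category.id_comp]
    slice_lhs 2 3 => rw [U.φ_hom_inv]
    simp
  · intro A X Z f g h k hg
    rw [hdual]
    simp only [UnitaryStruct.uip, Category.assoc, D.dmap_comp]
    rw [reassoc_of% hg]
    slice_lhs 2 3 => rw [U.φ_inv_hom]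
    simp
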